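/- Fix a (p,n) line metric partitioned into consecutive intervals of length ℓ/n each containing ℓ points. If γ·n of the points are global (incident to an edge with endpoints in two different intervals), then the total weight of the global edges is at least γ²·ℓ/16 times the weight of an MST of the n-point uniform line metric; equivalently, at least (1/2)·(γn/2)·(γℓ/(4n)) in absolute weight. -/

import Mathlib

/-- The `n`-point uniform line metric: the points `i/n` for `0 ≤ i ≤ n-1`. -/
noncomputable def uniformLine (n : ℕ) : Finset ℝ :=
  (Finset.range n).image (fun i : ℕ => (i : ℝ) / n)

/-- A `(p,n)` line metric: `p` points in `[0,1]` such that each interval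
`[i/n, (i+1)/n)` contains at most one point. -/
def IsPNLineMetric (P : Finset ℝ) (p n : ℕ) : Prop :=
  P.card = p ∧ (↑P : Set ℝ) ⊆ Set.Icc 0 1 ∧
    ∀ i < n, (P.filter (fun x => (i : ℝ) / n ≤ x ∧ x < ((i : ℝ) + 1) / n)).card ≤ 1

/-- Total weight of a set of edges between points on the line. -/
noncomputable def lineWeight (H : Finset (ℝ × ℝ)) : ℝ := ∑ e ∈ H, |e.1 - e.2|

/-- `H` joins every pair of points of `P` by a path of at most `k` edges
(hop-diameter `k`). -/
def HopConnected (H : Finset (ℝ × ℝ)) (P : Finset ℝ) (k : ℕ) : Prop :=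
  ∀ u ∈ P, ∀ v ∈ P, ∃ l : List ℝ, l.head? = some u ∧ l.getLast? = some v ∧
    l.length ≤ k + 1 ∧ l.Chain' (fun a b => (a, b) ∈ H ∨ (b, a) ∈ H)

/-- The weight of a minimum spanning tree of a finite set of points on the line:
the diameter `max - min`. -/
noncomputable def mstLine (P : Finset ℝ) : ℝ := sSup (↑P : Set ℝ) - sInf (↑P : Set ℝ)

/-- The index of the length-`ℓ/n` interval containing `x`. -/
noncomputable def intervalIdx (n ℓ : ℕ) (x : ℝ) : ℤ := ⌊x * n / ℓ⌋

open Finset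

def gfun (ℓ i : ℕ) : ℕ := min (i % ℓ + 1) (ℓ - i % ℓ)

lemma idx_eq (n ℓ : ℕ) (hn : 0 < n) (j : ℕ) :
    intervalIdx n ℓ ((j:ℝ)/n) = ((j / ℓ : ℕ) : ℤ) := by
  unfold intervalIdx
  rw [div_mul_cancel₀ _ (show (n:ℝ) ≠ 0 by positivity)]
  rw [← Int.natCast_floor_eq_floor (by positivity)]
  rw [Nat.floor_div_eq_div]

lemma gap (ℓ a b : ℕ) (hℓ : 0 < ℓ) (hne : a / ℓ ≠ b / ℓ) :
    ((gfun ℓ a : ℕ) : ℝ) ≤ |(a:ℝ) - (b:ℝ)| := by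
  unfold gfun
  have hda : a / ℓ * ℓ + a % ℓ = a := by rw [mul_comm]; exact Nat.div_add_mod a ℓ
  have hdb : b / ℓ * ℓ + b % ℓ = b := by rw [mul_comm]; exact Nat.div_add_mod b ℓ
  rcases lt_or_gt_of_ne hne with h | h
  · have h2 : (a / ℓ + 1) * ℓ ≤ (b / ℓ) * ℓ := Nat.mul_le_mul_right _ h
    have key : a + (ℓ - a % ℓ) ≤ b := by
      have h3 : (b / ℓ) * ℓ ≤ b := Nat.div_mul_le_self b ℓ
      have hma : a % ℓ < ℓ := Nat.mod_lt _ hℓ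
      rw [add_mul, one_mul] at h2
      omega
    have : ((a:ℝ) + (ℓ - a % ℓ : ℕ)) ≤ b := by exact_mod_cast key
    have h4 : ((min (a % ℓ + 1) (ℓ - a % ℓ) : ℕ) : ℝ) ≤ ((ℓ - a % ℓ : ℕ) : ℝ) := by
      exact_mod_cast Nat.cast_le.mpr (min_le_right _ _)
    rw [abs_sub_comm]
    calc ((min (a % ℓ + 1) (ℓ - a % ℓ) : ℕ) : ℝ) ≤ ((ℓ - a % ℓ : ℕ) : ℝ) := h4
      _ ≤ (b:ℝ) - a := by linarith
      _ ≤ |(b:ℝ) - a| := le_abs_self _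
  · have h2 : (b / ℓ + 1) * ℓ ≤ (a / ℓ) * ℓ := Nat.mul_le_mul_right _ h
    have key : b + (a % ℓ + 1) ≤ a := by
      have h3 : b < (b / ℓ + 1) * ℓ := (Nat.div_lt_iff_lt_mul hℓ).mp (Nat.lt_succ_self _)
      omega
    have : ((b:ℝ) + (a % ℓ + 1 : ℕ)) ≤ a := by exact_mod_cast key
    have h4 : ((min (a % ℓ + 1) (ℓ - a % ℓ) : ℕ) : ℝ) ≤ ((a % ℓ + 1 : ℕ) : ℝ) := by
      exact_mod_cast Nat.cast_le.mpr (min_le_left _ _)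
    calc ((min (a % ℓ + 1) (ℓ - a % ℓ) : ℕ) : ℝ) ≤ ((a % ℓ + 1 : ℕ) : ℝ) := h4
      _ ≤ (a:ℝ) - b := by linarith
      _ ≤ |(a:ℝ) - b| := le_abs_self _

lemma countA (ℓ m t : ℕ) (hℓ : 0 < ℓ) :
    ((Finset.range (m*ℓ)).filter (fun i => i % ℓ + 1 ≤ t)).card ≤ m * t := by
  have : ((Finset.range (m*ℓ)).filter (fun i => i % ℓ + 1 ≤ t)).card
      ≤ ((Finset.range m) ×ˢ (Finset.range t)).card := by
    apply Finset.card_le_card_of_injOn (fun i => (i / ℓ, i % ℓ))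
    · intro i hi
      simp only [mem_coe, mem_filter, mem_range] at hi
      simp only [mem_coe, mem_product, mem_range]
      exact ⟨(Nat.div_lt_iff_lt_mul hℓ).mpr hi.1, by omega⟩
    · intro a ha b hb h
      have h1 : a / ℓ = b / ℓ := congrArg Prod.fst h
      have h2 : a % ℓ = b % ℓ := congrArg Prod.snd h
      have hda : a / ℓ * ℓ + a % ℓ = a := by rw [mul_comm]; exact Nat.div_add_mod a ℓ
      have hdb : b / ℓ * ℓ + b % ℓ = b := by rw [mul_comm]; exact Nat.div_add_mod b ℓ
      rw [h1] at hda; omega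
  simpa using this

lemma countB (ℓ m t : ℕ) (hℓ : 0 < ℓ) :
    ((Finset.range (m*ℓ)).filter (fun i => ℓ - i % ℓ ≤ t)).card ≤ m * t := by
  have : ((Finset.range (m*ℓ)).filter (fun i => ℓ - i % ℓ ≤ t)).card
      ≤ ((Finset.range m) ×ˢ (Finset.range t)).card := by
    apply Finset.card_le_card_of_injOn (fun i => (i / ℓ, i % ℓ - (ℓ - t)))
    · intro i hi
      simp only [mem_coe, mem_filter, mem_range] at hi
      simp only [mem_coe, mem_product, mem_range]
      have hm : i % ℓ < ℓ := Nat.mod_lt _ hℓ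
      exact ⟨(Nat.div_lt_iff_lt_mul hℓ).mpr hi.1, by omega⟩
    · intro a ha b hb h
      simp only [mem_coe, mem_filter, mem_range] at ha hb
      have h1 : a / ℓ = b / ℓ := congrArg Prod.fst h
      have h2 : a % ℓ - (ℓ - t) = b % ℓ - (ℓ - t) := congrArg Prod.snd h
      have hda : a / ℓ * ℓ + a % ℓ = a := by rw [mul_comm]; exact Nat.div_add_mod a ℓ
      have hdb : b / ℓ * ℓ + b % ℓ = b := by rw [mul_comm]; exact Nat.div_add_mod b ℓ
      have hma : a % ℓ < ℓ := Nat.mod_lt _ hℓ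
      have hmb : b % ℓ < ℓ := Nat.mod_lt _ hℓ
      rw [h1] at hda; omega
  simpa using this

lemma countC (ℓ m t : ℕ) (hℓ : 0 < ℓ) (G : Finset ℕ) (hG : G ⊆ Finset.range (m*ℓ)) :
    (G.filter (fun i => gfun ℓ i ≤ t)).card ≤ 2 * (m * t) := by
  classical
  have hsub : G.filter (fun i => gfun ℓ i ≤ t) ⊆
      ((Finset.range (m*ℓ)).filter (fun i => i % ℓ + 1 ≤ t)) ∪
      ((Finset.range (m*ℓ)).filter (fun i => ℓ - i % ℓ ≤ t)) := by
    intro i hi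
    simp only [mem_filter] at hi
    have hi' := hG hi.1
    rcases min_le_iff.mp hi.2 with h | h
    · exact Finset.mem_union_left _ (mem_filter.mpr ⟨hi', h⟩)
    · exact Finset.mem_union_right _ (mem_filter.mpr ⟨hi', h⟩)
  calc _ ≤ _ := Finset.card_le_card hsub
    _ ≤ _ + _ := Finset.card_union_le _ _
    _ ≤ 2 * (m * t) := by
        have := countA ℓ m t hℓ
        have := countB ℓ m t hℓ
        omega

lemma combA (ℓ m : ℕ) (hℓ : 0 < ℓ) (hm : 0 < m) (G : Finset ℕ)
    (hG : G ⊆ Finset.range (m*ℓ)) :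
    G.card ^ 2 ≤ 8 * m * ∑ i ∈ G, gfun ℓ i := by
  classical
  set k := G.card with hk
  set q := k / (2*m) with hq
  set X := ∑ i ∈ G, gfun ℓ i with hX
  set S := ∑ t ∈ Finset.range (q+1), (G.filter (fun i => t < gfun ℓ i)).card with hS
  have step1 : S ≤ X := by
    have hrw : S = ∑ i ∈ G, ((Finset.range (q+1)).filter (fun t => t < gfun ℓ i)).card := by
      rw [hS]
      simp only [Finset.card_filter]
      rw [Finset.sum_comm]
    rw [hrw, hX]
    apply Finset.sum_le_sum
    intro i _
    calc ((Finset.range (q+1)).filter (fun t => t < gfun ℓ i)).card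
        ≤ (Finset.range (gfun ℓ i)).card := by
          apply Finset.card_le_card
          intro t ht
          simp only [mem_filter, mem_range] at ht ⊢
          exact ht.2
      _ = gfun ℓ i := Finset.card_range _
  have step2 : ∀ t, k ≤ (G.filter (fun i => t < gfun ℓ i)).card + 2 * (m * t) := by
    intro t
    have hpart := Finset.card_filter_add_card_filter_not
      (s := G) (p := fun i => gfun ℓ i ≤ t)
    have hc := countC ℓ m t hℓ G hG
    have heq : (G.filter (fun i => ¬ gfun ℓ i ≤ t)) = G.filter (fun i => t < gfun ℓ i) := by
      apply Finset.filter_congr; intro i _; simp only [not_le]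
    rw [heq] at hpart
    omega
  have gauss : (∑ t ∈ Finset.range (q+1), t) * 2 = (q+1) * q := by
    have := Finset.sum_range_id_mul_two (q+1)
    simpa using this
  have step3 : k * (q+1) ≤ S + m * ((q+1) * q) := by
    have hsum : ∑ _t ∈ Finset.range (q+1), k ≤
        ∑ t ∈ Finset.range (q+1), ((G.filter (fun i => t < gfun ℓ i)).card + 2 * (m * t)) :=
      Finset.sum_le_sum (fun t _ => step2 t)
    rw [Finset.sum_add_distrib, Finset.sum_const, Finset.card_range, ← hS] at hsum
    have h2 : ∑ t ∈ Finset.range (q+1), 2 * (m * t) = m * ((q+1) * q) := by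
      rw [← gauss, Finset.sum_mul, Finset.mul_sum]
      exact Finset.sum_congr rfl fun t _ => by ring
    rw [h2] at hsum
    simpa [smul_eq_mul, mul_comm] using hsum
  have hdm : 2*m*q + k % (2*m) = k := Nat.div_add_mod k (2*m)
  have hcl : k % (2*m) < 2*m := Nat.mod_lt _ (by omega)
  -- move to ℤ
  have final : (k:ℤ)^2 ≤ 8 * (m:ℤ) * (X:ℤ) := by
    have s1 : (S:ℤ) ≤ X := by exact_mod_cast step1
    have s3 : (k:ℤ) * (q+1) ≤ S + m * ((q+1) * q) := by exact_mod_cast step3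
    have hd : 2*(m:ℤ)*q + (k % (2*m) : ℕ) = k := by exact_mod_cast hdm
    have hcl' : ((k % (2*m) : ℕ) : ℤ) < 2*m := by exact_mod_cast hcl
    set C : ℤ := ((k % (2*m) : ℕ) : ℤ) with hC
    have hC0 : 0 ≤ C := Int.ofNat_nonneg _
    have hM : (1:ℤ) ≤ m := by exact_mod_cast hm
    have hQ : (0:ℤ) ≤ q := Int.ofNat_nonneg _
    nlinarith [s1, s3, hd, hcl', hC0, hM, hQ,
      mul_nonneg hC0 (by linarith : (0:ℤ) ≤ 8*(m:ℤ) - C),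
      mul_nonneg (mul_nonneg (by linarith : (0:ℤ) ≤ (m:ℤ)) hQ) hQ,
      sq_nonneg ((m:ℤ)*q),
      mul_le_mul_of_nonneg_left s3 (by linarith : (0:ℤ) ≤ 8*(m:ℤ)),
      mul_le_mul_of_nonneg_left s1 (by linarith : (0:ℤ) ≤ 8*(m:ℤ))]
  calc G.card ^ 2 = k ^ 2 := by rw [hk]
    _ ≤ 8 * m * X := by exact_mod_cast final



/-- partition the `n`-point uniform line metric into consecutive intervals
of length `ℓ/n`, each containing `ℓ` points (`ℓ ∣ n`). An edge of a spanner `H` is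
*global* if its endpoints lie in different intervals, and a point is *global* if it is
incident to a global edge. If `γ·n` of the points are global, then the total weight of
the global edges is at least `γ²·ℓ/16` times the MST weight `(n-1)/n` of the uniform
line metric. -/
theorem stmt9 (n ℓ : ℕ) (hn : 0 < n) (hℓ : 0 < ℓ) (hdvd : ℓ ∣ n)
    (H : Finset (ℝ × ℝ)) (hHP : H ⊆ uniformLine n ×ˢ uniformLine n)
    (γ : ℝ) (hγ0 : 0 ≤ γ) (hγ1 : γ ≤ 1)
    (hcount : (((uniformLine n).filter (fun x => ∃ e ∈ H, (e.1 = x ∨ e.2 = x) ∧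
        intervalIdx n ℓ e.1 ≠ intervalIdx n ℓ e.2)).card : ℝ) = γ * n) :
    γ ^ 2 * (ℓ : ℝ) / 16 * (((n : ℝ) - 1) / (n : ℝ)) ≤
      ∑ e ∈ H.filter (fun e => intervalIdx n ℓ e.1 ≠ intervalIdx n ℓ e.2),
        |e.1 - e.2| := by
  classical
  have hn0 : (0:ℝ) < n := by exact_mod_cast hn
  set Hg := H.filter (fun e => intervalIdx n ℓ e.1 ≠ intervalIdx n ℓ e.2) with hHg
  set W := ∑ e ∈ Hg, |e.1 - e.2| with hW
  have hW0 : 0 ≤ W := Finset.sum_nonneg fun e _ => abs_nonneg _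
  set G : Finset ℕ := (Finset.range n).filter (fun i : ℕ => ∃ e ∈ H, (e.1 = (i:ℝ)/n ∨ e.2 = (i:ℝ)/n) ∧
      intervalIdx n ℓ e.1 ≠ intervalIdx n ℓ e.2) with hG
  -- card of G equals the card in hcount
  have hinj : Set.InjOn (fun i : ℕ => (i:ℝ)/n) (Finset.range n : Set ℕ) := by
    intro a _ b _ h
    field_simp at h
    exact_mod_cast h
  have hcardG : (G.card : ℝ) = γ * n := by
    rw [← hcount]
    congr 1
    rw [uniformLine, Finset.filter_image]
    rw [Finset.card_image_of_injOn (hinj.mono (fun x hx => by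
      simp only [Finset.coe_filter, Set.mem_setOf_eq] at hx
      exact Finset.mem_coe.mpr hx.1))]
  -- pointwise edge lemma
  have hA : ∀ i ∈ G, ∃ e, e ∈ Hg ∧ ((i:ℝ)/n = e.1 ∨ (i:ℝ)/n = e.2) ∧
      ((gfun ℓ i : ℕ):ℝ)/n ≤ |e.1 - e.2| := by
    intro i hi
    rw [hG, Finset.mem_filter] at hi
    obtain ⟨e, heH, hinc, hne⟩ := hi.2
    have hiN : i < n := Finset.mem_range.mp hi.1
    obtain ⟨h1, h2⟩ := Finset.mem_product.mp (hHP heH)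
    obtain ⟨a, haN, ha⟩ := Finset.mem_image.mp h1
    obtain ⟨b, hbN, hb⟩ := Finset.mem_image.mp h2
    refine ⟨e, Finset.mem_filter.mpr ⟨heH, hne⟩, ?_, ?_⟩
    · tauto
    · have hidxa : intervalIdx n ℓ e.1 = ((a / ℓ : ℕ) : ℤ) := by rw [← ha]; exact idx_eq n ℓ hn a
      have hidxb : intervalIdx n ℓ e.2 = ((b / ℓ : ℕ) : ℤ) := by rw [← hb]; exact idx_eq n ℓ hn b
      have hdiv : a / ℓ ≠ b / ℓ := by
        intro hcontra
        exact hne (by rw [hidxa, hidxb, hcontra])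
      have habs : |e.1 - e.2| = |(a:ℝ) - b| / n := by
        rw [← ha, ← hb, div_sub_div_same, abs_div, abs_of_nonneg hn0.le]
      rcases hinc with hca | hca
      · -- e.1 = i/n , so a = i
        have hai : a = i := by
          have : (a:ℝ)/n = (i:ℝ)/n := by rw [ha, hca]
          exact_mod_cast hinj (by simpa using haN) (by simp [hiN]) this
        rw [habs, ← hai]
        exact (div_le_div_iff_of_pos_right hn0).mpr (gap ℓ a b hℓ hdiv)
      · have hbi : b = i := by
          have : (b:ℝ)/n = (i:ℝ)/n := by rw [hb, hca]
          exact_mod_cast hinj (by simpa using hbN) (by simp [hiN]) this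
        rw [habs, ← hbi, abs_sub_comm]
        exact (div_le_div_iff_of_pos_right hn0).mpr (gap ℓ b a hℓ (Ne.symm hdiv))
  -- choice function
  set φ : ℕ → ℝ × ℝ := fun i =>
    if h : ∃ e, e ∈ Hg ∧ ((i:ℝ)/n = e.1 ∨ (i:ℝ)/n = e.2) ∧
        ((gfun ℓ i : ℕ):ℝ)/n ≤ |e.1 - e.2| then h.choose else ((0:ℝ), (0:ℝ)) with hφdef
  have hφ : ∀ i ∈ G, φ i ∈ Hg ∧ ((i:ℝ)/n = (φ i).1 ∨ (i:ℝ)/n = (φ i).2) ∧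
      ((gfun ℓ i : ℕ):ℝ)/n ≤ |(φ i).1 - (φ i).2| := by
    intro i hi
    have h := hA i hi
    have heq : φ i = h.choose := by rw [hφdef]; exact dif_pos h
    rw [heq]
    exact h.choose_spec
  -- double counting
  have B1 : ∑ i ∈ G, ((gfun ℓ i : ℕ):ℝ)/n ≤ ∑ i ∈ G, |(φ i).1 - (φ i).2| :=
    Finset.sum_le_sum fun i hi => (hφ i hi).2.2
  have B2 : ∑ i ∈ G, |(φ i).1 - (φ i).2| =
      ∑ e ∈ G.image φ, (G.filter (fun i => φ i = e)).card • |e.1 - e.2| :=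
    Finset.sum_comp (fun e : ℝ × ℝ => |e.1 - e.2|) φ
  have B3 : ∀ e ∈ G.image φ, (G.filter (fun i => φ i = e)).card • |e.1 - e.2|
      ≤ 2 * |e.1 - e.2| := by
    intro e _
    have hcard2 : (G.filter (fun i => φ i = e)).card ≤ 2 := by
      have : (G.filter (fun i => φ i = e)).card ≤ ({e.1, e.2} : Finset ℝ).card := by
        apply Finset.card_le_card_of_injOn (fun i : ℕ => (i:ℝ)/n)
        · intro i hi
          rw [Finset.mem_coe, Finset.mem_filter] at hi
          have h := (hφ i hi.1).2.1
          rw [hi.2] at h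
          simp only [Finset.mem_coe, Finset.mem_insert, Finset.mem_singleton]
          tauto
        · intro a ha b hb h
          apply hinj
          · have := (Finset.mem_filter.mp ha).1
            rw [hG, Finset.mem_filter] at this
            simpa using this.1
          · have := (Finset.mem_filter.mp hb).1
            rw [hG, Finset.mem_filter] at this
            simpa using this.1
          · exact h
      calc _ ≤ _ := this
        _ ≤ 2 := le_trans (Finset.card_insert_le _ _) (by simp)
    rw [nsmul_eq_mul]
    apply mul_le_mul_of_nonneg_right _ (abs_nonneg _)
    exact_mod_cast hcard2
  have B4 : ∑ i ∈ G, |(φ i).1 - (φ i).2| ≤ 2 * W := by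
    rw [B2]
    calc ∑ e ∈ G.image φ, (G.filter (fun i => φ i = e)).card • |e.1 - e.2|
        ≤ ∑ e ∈ G.image φ, 2 * |e.1 - e.2| := Finset.sum_le_sum B3
      _ ≤ ∑ e ∈ Hg, 2 * |e.1 - e.2| := by
          apply Finset.sum_le_sum_of_subset_of_nonneg
          · intro e he
            obtain ⟨i, hi, rfl⟩ := Finset.mem_image.mp he
            exact (hφ i hi).1
          · intro e _ _
            positivity
      _ = 2 * W := by rw [hW, Finset.mul_sum]
  -- combinatorial bound
  set m := n / ℓ with hm
  have hmn : m * ℓ = n := Nat.div_mul_cancel hdvd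
  have hm0 : 0 < m := by
    rcases Nat.eq_zero_or_pos m with h | h
    · rw [h] at hmn; omega
    · exact h
  have hGsub : G ⊆ Finset.range (m * ℓ) := by
    rw [hmn, hG]; exact Finset.filter_subset _ _
  have hcomb : G.card ^ 2 ≤ 8 * m * ∑ i ∈ G, gfun ℓ i := combA ℓ m hℓ hm0 G hGsub
  -- assemble
  set k := G.card with hk
  set SgN := ∑ i ∈ G, gfun ℓ i with hSgN
  have hsum_cast : ∑ i ∈ G, ((gfun ℓ i : ℕ):ℝ)/n = (SgN : ℝ)/n := by
    rw [hSgN, ← Finset.sum_div]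
    push_cast
    ring
  have hmain : (SgN : ℝ)/n ≤ 2 * W := by
    rw [← hsum_cast]; exact le_trans B1 B4
  have hcombR : (k:ℝ)^2 ≤ 8 * (m:ℝ) * (SgN:ℝ) := by exact_mod_cast hcomb
  have hγn : γ * n = k := hcardG.symm
  have hmℓ : (m:ℝ) * ℓ = n := by exact_mod_cast hmn
  -- γ^2 * ℓ ≤ 16 * W
  have hkey : γ^2 * ℓ * n^2 ≤ 16 * W * n^2 := by
    have h1 : (SgN:ℝ) ≤ 2 * W * n := by
      have := mul_le_mul_of_nonneg_right hmain hn0.le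
      rwa [div_mul_cancel₀ _ hn0.ne'] at this
    have h2 : γ^2 * ℓ * n^2 = (k:ℝ)^2 * ℓ := by
      rw [← hγn]; ring
    rw [h2]
    calc (k:ℝ)^2 * ℓ ≤ 8 * (m:ℝ) * (SgN:ℝ) * ℓ := by
          apply mul_le_mul_of_nonneg_right hcombR (by positivity)
      _ = 8 * (SgN:ℝ) * ((m:ℝ) * ℓ) := by ring
      _ = 8 * (SgN:ℝ) * n := by rw [hmℓ]
      _ ≤ 8 * (2 * W * n) * n := by nlinarith [h1, hn0]
      _ = 16 * W * n^2 := by ring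
  have hfinal : γ^2 * ℓ / 16 ≤ W := by
    have hsq : (0:ℝ) < n^2 := by positivity
    have := (mul_le_mul_iff_of_pos_right hsq).mp hkey
    linarith
  calc γ ^ 2 * (ℓ : ℝ) / 16 * (((n : ℝ) - 1) / (n : ℝ))
      ≤ γ ^ 2 * (ℓ : ℝ) / 16 * 1 := by
        apply mul_le_mul_of_nonneg_left _ (by positivity)
        rw [div_le_one hn0]
        linarith
    _ = γ ^ 2 * (ℓ : ℝ) / 16 := by ring
    _ ≤ W := hfinal
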